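/- For every odd integer m ≥ 11 there exists a decentralized linear code of length ℓ = 4 for parameters (m, s = m − 3) that is both correct and secure. -/
import Mathlib


namespace SDPicod

/-- Side information set of user `i`: the `s` cyclically consecutive message
indices ending at `i`, i.e. `{i - k : k ∈ Finset.range s}`. -/
def sideInfo (m s : ℕ) (i : ZMod m) : Set (ZMod m) :=
  {j | ∃ k ∈ Finset.range s, j = i - (k : ZMod m)}

/-- A decentralized linear code: every row is encodable by some user, i.e.
its support is contained in that user's side information set. -/
def IsDecentralizedCode (m s : ℕ) {ℓ : ℕ} (G : Fin ℓ → ZMod m → ZMod 2) : Prop :=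
  ∀ t : Fin ℓ, ∃ i : ZMod m, Function.support (G t) ⊆ sideInfo m s i

/-- The set of message indices user `i` can decode: indices `j` outside the
side information set such that the standard basis vector `e j` lies in the
`GF(2)`-span of the rows of `G` together with the basis vectors of the
side information set. -/
def decSet (m s : ℕ) {ℓ : ℕ} (G : Fin ℓ → ZMod m → ZMod 2) (i : ZMod m) :
    Set (ZMod m) :=
  {j | j ∉ sideInfo m s i ∧
    Pi.single j (1 : ZMod 2) ∈ Submodule.span (ZMod 2)
      (Set.range G ∪ {v | ∃ k ∈ sideInfo m s i, v = Pi.single k (1 : ZMod 2)})}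

/-- Correctness: every user can decode at least one new message. -/
def Correct (m s : ℕ) {ℓ : ℕ} (G : Fin ℓ → ZMod m → ZMod 2) : Prop :=
  ∀ i : ZMod m, (decSet m s G i).Nonempty

/-- Security: no user can decode more than one new message. -/
def Secure (m s : ℕ) {ℓ : ℕ} (G : Fin ℓ → ZMod m → ZMod 2) : Prop :=
  ∀ i : ZMod m, (decSet m s G i).Subsingleton

end SDPicod

open SDPicod

section AuxSD

variable {m : ℕ}

/-- The colouring function: which of the 4 rows covers position `v`. -/
def Fc (m : ℕ) (v : ℕ) : Fin 4 :=
  if v = 0 then 1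
  else if v ≤ 2 then 0
  else if v ≤ 4 then 1
  else if v ≤ 6 then 2
  else if v ≤ 8 then 3
  else if ((m - 1 - v) / 2) % 2 = 0 then 0 else 1

/-- The code: row `t` is the indicator of positions coloured `t`. -/
def Gc (m : ℕ) : Fin 4 → ZMod m → ZMod 2 :=
  fun t j => if Fc m j.val = t then 1 else 0

/-- exactly two of three equal -/
def Wpat (x y z : Fin 4) : Prop :=
  (x = y ∧ y ≠ z) ∨ (y = z ∧ x ≠ y) ∨ (x = z ∧ x ≠ y)

lemma Fc_tail (v : ℕ) (hv : 9 ≤ v) :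
    Fc m v = if ((m - 1 - v) / 2) % 2 = 0 then 0 else 1 := by
  unfold Fc
  rw [if_neg (by omega), if_neg (by omega), if_neg (by omega), if_neg (by omega),
    if_neg (by omega)]

lemma ite01_eq {a b : ℕ} (h : a % 2 = b % 2) :
    (if a % 2 = 0 then (0 : Fin 4) else 1) = (if b % 2 = 0 then 0 else 1) := by
  rw [h]

lemma ite01_ne {a b : ℕ} (h : a % 2 ≠ b % 2) :
    (if a % 2 = 0 then (0 : Fin 4) else 1) ≠ (if b % 2 = 0 then 0 else 1) := by
  split_ifs with h1 h2 h2 <;> first | omega | decide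

lemma windowAt (hm : 11 ≤ m) (ho : Odd m) (v : ℕ) (hv : v < m) :
    Wpat (Fc m v) (Fc m ((v + 1) % m)) (Fc m ((v + 2) % m)) := by
  obtain ⟨k, hk⟩ := ho
  have h9 : Fc m 9 = if ((m - 1 - 9) / 2) % 2 = 0 then 0 else 1 := Fc_tail 9 (by omega)
  have h10 : Fc m 10 = if ((m - 1 - 10) / 2) % 2 = 0 then 0 else 1 := Fc_tail 10 (by omega)
  have h910 : Fc m 9 = Fc m 10 := by
    rw [h9, h10]
    exact ite01_eq (by omega)
  have h9ne3 : Fc m 9 ≠ 3 := by rw [h9]; split_ifs <;> decide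
  rcases (by omega : v ≤ 8 ∨ (9 ≤ v ∧ v + 3 ≤ m) ∨ v = m - 2 ∨ v = m - 1) with h | h | h | h
  · -- small cases
    have e1 : (v + 1) % m = v + 1 := Nat.mod_eq_of_lt (by omega)
    have e2 : (v + 2) % m = v + 2 := Nat.mod_eq_of_lt (by omega)
    rw [e1, e2]
    interval_cases v
    · right; left; exact ⟨by norm_num [Fc]; try decide, by norm_num [Fc]; try decide⟩
    · left; exact ⟨by norm_num [Fc]; try decide, by norm_num [Fc]; try decide⟩
    · right; left; exact ⟨by norm_num [Fc]; try decide, by norm_num [Fc]; try decide⟩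
    · left; exact ⟨by norm_num [Fc]; try decide, by norm_num [Fc]; try decide⟩
    · right; left; exact ⟨by norm_num [Fc]; try decide, by norm_num [Fc]; try decide⟩
    · left; exact ⟨by norm_num [Fc]; try decide, by norm_num [Fc]; try decide⟩
    · right; left; exact ⟨by norm_num [Fc]; try decide, by norm_num [Fc]; try decide⟩
    · -- v = 7 : (3, 3, Fc 9)
      left
      constructor
      · norm_num [Fc]
      · show Fc m 8 ≠ Fc m 9
        have : Fc m 8 = 3 := by norm_num [Fc]
        rw [this]
        exact fun hcon => h9ne3 hcon.symm
    · -- v = 8 : (3, Fc 9, Fc 10)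
      right; left
      constructor
      · exact h910
      · show Fc m 8 ≠ Fc m 9
        have : Fc m 8 = 3 := by norm_num [Fc]
        rw [this]
        exact fun hcon => h9ne3 hcon.symm
  · -- tail cases
    obtain ⟨h9v, hv3⟩ := h
    have e1 : (v + 1) % m = v + 1 := Nat.mod_eq_of_lt (by omega)
    have e2 : (v + 2) % m = v + 2 := Nat.mod_eq_of_lt (by omega)
    rw [e1, e2, Fc_tail v (by omega), Fc_tail (v+1) (by omega), Fc_tail (v+2) (by omega)]
    set A := (m - 1 - v) / 2 with hA
    set B := (m - 1 - (v+1)) / 2 with hB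
    set C := (m - 1 - (v+2)) / 2 with hC
    rcases (by omega : (A % 2 = B % 2 ∧ B % 2 ≠ C % 2) ∨ (B % 2 = C % 2 ∧ A % 2 ≠ B % 2))
      with ⟨hab, hbc⟩ | ⟨hbc, hab⟩
    · left; exact ⟨ite01_eq hab, ite01_ne hbc⟩
    · right; left; exact ⟨ite01_eq hbc, ite01_ne hab⟩
  · -- v = m - 2 : (Fc (m-2), Fc (m-1), Fc 0)
    subst h
    have e1 : (m - 2 + 1) % m = m - 1 := by
      rw [Nat.mod_eq_of_lt (by omega)]; omega
    have e2 : (m - 2 + 2) % m = 0 := by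
      have : m - 2 + 2 = m := by omega
      rw [this, Nat.mod_self]
    rw [e1, e2]
    left
    constructor
    · rw [Fc_tail (m-2) (by omega), Fc_tail (m-1) (by omega)]
      exact ite01_eq (by omega)
    · rw [Fc_tail (m-1) (by omega)]
      have : Fc m 0 = 1 := by norm_num [Fc]
      rw [this, if_pos (by omega)]
      decide
  · -- v = m - 1 : (Fc (m-1), Fc 0, Fc 1)
    subst h
    have e1 : (m - 1 + 1) % m = 0 := by
      have : m - 1 + 1 = m := by omega
      rw [this, Nat.mod_self]
    have e2 : (m - 1 + 2) % m = 1 := by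
      have : m - 1 + 2 = m + 1 := by omega
      rw [this, Nat.add_mod_left, Nat.mod_eq_of_lt (by omega)]
    rw [e1, e2]
    right; right
    have hm1 : Fc m (m-1) = 0 := by
      rw [Fc_tail (m-1) (by omega), if_pos (by omega)]
    have hf0 : Fc m 0 = 1 := by norm_num [Fc]
    have hf1 : Fc m 1 = 0 := by norm_num [Fc]
    rw [hm1, hf0, hf1]
    exact ⟨rfl, by decide⟩

lemma wpat_norm (w : Fin 3 → Fin 4) (h : Wpat (w 0) (w 1) (w 2)) :
    ∃ d : Fin 3, (∀ s, s ≠ d → w s ≠ w d) ∧ (∀ s s', s ≠ d → s' ≠ d → w s = w s') := by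
  rcases h with ⟨h1, h2⟩ | ⟨h1, h2⟩ | ⟨h1, h2⟩
  · -- w 0 = w 1, w 1 ≠ w 2 : singleton at 2
    refine ⟨2, ?_, ?_⟩
    · intro s hs
      fin_cases s
      · show w 0 ≠ w 2; rw [h1]; exact h2
      · exact h2
      · exact absurd rfl hs
    · intro s s' hs hs'
      fin_cases s <;> fin_cases s' <;>
        first | rfl | exact h1 | exact h1.symm | exact absurd rfl hs | exact absurd rfl hs'
  · -- w 1 = w 2, w 0 ≠ w 1 : singleton at 0
    refine ⟨0, ?_, ?_⟩
    · intro s hs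
      fin_cases s
      · exact absurd rfl hs
      · exact fun hc => h2 hc.symm
      · show w 2 ≠ w 0; rw [← h1]; exact fun hc => h2 hc.symm
    · intro s s' hs hs'
      fin_cases s <;> fin_cases s' <;>
        first | rfl | exact h1 | exact h1.symm | exact absurd rfl hs | exact absurd rfl hs'
  · -- w 0 = w 2, w 0 ≠ w 1 : singleton at 1
    refine ⟨1, ?_, ?_⟩
    · intro s hs
      fin_cases s
      · exact h2
      · exact absurd rfl hs
      · show w 2 ≠ w 1; rw [← h1]; exact h2
    · intro s s' hs hs'
      fin_cases s <;> fin_cases s' <;>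
        first | rfl | exact h1 | exact h1.symm | exact absurd rfl hs | exact absurd rfl hs'

lemma mem_sideInfo_iff (hm : 11 ≤ m) (i j : ZMod m) :
    j ∈ sideInfo m (m - 3) i ↔ ¬(j = i + 1 ∨ j = i + 2 ∨ j = i + 3) := by
  haveI : NeZero m := ⟨by omega⟩
  constructor
  · rintro ⟨k, hk, rfl⟩ h
    rw [Finset.mem_range] at hk
    have key : ∀ c : ℕ, 1 ≤ c → c ≤ 3 → i - (k : ZMod m) = i + (c : ℕ) → False := by
      intro c hc1 hc hcon
      have h0 : ((k + c : ℕ) : ZMod m) = 0 := by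
        push_cast
        linear_combination -hcon
      rw [ZMod.natCast_eq_zero_iff] at h0
      rcases Nat.eq_zero_or_pos (k + c) with h' | h'
      · omega
      · have := Nat.le_of_dvd h' h0
        omega
    rcases h with h | h | h
    · exact key 1 (by omega) (by omega) (by rw [h]; norm_num)
    · exact key 2 (by omega) (by omega) (by rw [h]; norm_num)
    · exact key 3 (by omega) (by omega) (by rw [h]; norm_num)
  · intro h
    push_neg at h
    obtain ⟨h1, h2, h3⟩ := h
    refine ⟨(i - j).val, ?_, ?_⟩
    · rw [Finset.mem_range]
      by_contra hge
      push_neg at hge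
      have hlt : (i - j).val < m := ZMod.val_lt _
      have hij : ((i - j).val : ZMod m) = i - j := by
        rw [ZMod.natCast_val, ZMod.cast_id]
      have hcast : ∀ c : ℕ, c ≤ 3 → (i - j).val = m - c → j = i + (c : ℕ) := by
        intro c hc hval
        have : ((m - c : ℕ) : ZMod m) = -(c : ZMod m) := by
          have : ((m - c : ℕ) : ZMod m) = ((m : ℕ) : ZMod m) - (c : ZMod m) := by
            rw [Nat.cast_sub (by omega)]
          rw [this, ZMod.natCast_self]
          ring
        rw [hval, this] at hij
        linear_combination hij
      rcases (by omega : (i - j).val = m - 3 ∨ (i - j).val = m - 2 ∨ (i - j).val = m - 1)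
        with hval | hval | hval
      · exact h3 (by have := hcast 3 (by omega) hval; simpa using this)
      · exact h2 (by have := hcast 2 (by omega) hval; simpa using this)
      · exact h1 (by have := hcast 1 (by omega) hval; simpa using this)
    · rw [ZMod.natCast_val, ZMod.cast_id]; ring

lemma span_singles (hm : 11 ≤ m) (A : Set (ZMod m)) (v : ZMod m → ZMod 2)
    (hv : ∀ k, v k ≠ 0 → k ∈ A) :
    v ∈ Submodule.span (ZMod 2) {w | ∃ k ∈ A, w = Pi.single k (1 : ZMod 2)} := by
  haveI : NeZero m := ⟨by omega⟩
  have hrep : v = ∑ k : ZMod m, v k • Pi.single k (1 : ZMod 2) := by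
    funext j
    rw [Finset.sum_apply]
    rw [Finset.sum_eq_single j]
    · simp
    · intro k _ hk
      simp [Pi.single_apply, Ne.symm hk]
    · intro hj; exact absurd (Finset.mem_univ j) hj
  rw [hrep]
  refine Submodule.sum_mem _ (fun k _ => ?_)
  by_cases h : v k = 0
  · simp [h]
  · exact Submodule.smul_mem _ _ (Submodule.subset_span ⟨k, hv k h, rfl⟩)

lemma decSet_iff (hm : 11 ≤ m) (G : Fin 4 → ZMod m → ZMod 2) (i j : ZMod m) :
    j ∈ decSet m (m - 3) G i ↔
      ∃ d : Fin 3, j = i + 1 + ((d : ℕ) : ZMod m) ∧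
        Pi.single d (1 : ZMod 2) ∈ Submodule.span (ZMod 2)
          (Set.range fun t : Fin 4 => fun s : Fin 3 => G t (i + 1 + ((s : ℕ) : ZMod m))) := by
  haveI : NeZero m := ⟨by omega⟩
  set P : Fin 3 → ZMod m := fun s => i + 1 + ((s : ℕ) : ZMod m) with hPdef
  have hP0 : P 0 = i + 1 := by simp [P]
  have hP1 : P 1 = i + 2 := by show i + 1 + ((1:ℕ) : ZMod m) = i + 2; push_cast; ring
  have hP2 : P 2 = i + 3 := by show i + 1 + ((2:ℕ) : ZMod m) = i + 3; push_cast; ring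
  have hPinj : Function.Injective P := by
    intro s s' hss
    have h1 : ((s : ℕ) : ZMod m) = ((s' : ℕ) : ZMod m) := by
      have := hss
      simp only [P] at this
      exact add_left_cancel this
    have h2 : (s : ℕ) = (s' : ℕ) := by
      have := congrArg ZMod.val h1
      rwa [ZMod.val_cast_of_lt (by omega), ZMod.val_cast_of_lt (by omega)] at this
    exact Fin.ext h2
  have hPnot : ∀ s : Fin 3, P s ∉ sideInfo m (m - 3) i := by
    intro s hs
    rw [mem_sideInfo_iff hm] at hs
    apply hs
    fin_cases s
    · left; exact hP0
    · right; left; exact hP1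
    · right; right; exact hP2
  have hsingle : ∀ d : Fin 3, Pi.single (P d) (1 : ZMod 2) ∘ P = Pi.single d 1 := by
    intro d
    funext s
    by_cases hs : s = d
    · subst hs; simp
    · simp only [Function.comp_apply]
      rw [Pi.single_eq_of_ne (fun hc => hs (hPinj hc)), Pi.single_eq_of_ne hs]
  constructor
  · rintro ⟨hjn, hjspan⟩
    have hj3 : j = i + 1 ∨ j = i + 2 ∨ j = i + 3 := by
      by_contra hcon
      exact hjn ((mem_sideInfo_iff hm i j).mpr hcon)
    obtain ⟨d, hjd⟩ : ∃ d : Fin 3, j = P d := by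
      rcases hj3 with h | h | h
      exacts [⟨0, h.trans hP0.symm⟩, ⟨1, h.trans hP1.symm⟩, ⟨2, h.trans hP2.symm⟩]
    refine ⟨d, hjd, ?_⟩
    let r : (ZMod m → ZMod 2) →ₗ[ZMod 2] (Fin 3 → ZMod 2) :=
      LinearMap.pi (fun s => LinearMap.proj (P s))
    have h1 := Submodule.apply_mem_span_image_of_mem_span r hjspan
    have h2 : r (Pi.single j 1) = Pi.single d 1 := by
      rw [hjd]
      exact hsingle d
    have h3 : Submodule.span (ZMod 2)
        (r '' (Set.range G ∪ {v | ∃ k ∈ sideInfo m (m-3) i, v = Pi.single k (1:ZMod 2)}))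
        ≤ Submodule.span (ZMod 2) (Set.range fun t : Fin 4 => fun s : Fin 3 => G t (P s)) := by
      rw [Submodule.span_le, Set.image_union]
      apply Set.union_subset
      · rintro x ⟨y, ⟨t, rfl⟩, rfl⟩
        exact Submodule.subset_span ⟨t, rfl⟩
      · rintro x ⟨y, ⟨k, hk, rfl⟩, rfl⟩
        have : r (Pi.single k (1:ZMod 2)) = 0 := by
          funext s
          simp only [r, LinearMap.pi_apply, LinearMap.proj_apply, Pi.zero_apply]
          exact Pi.single_eq_of_ne (fun hc => hPnot s (by rw [hc]; exact hk)) _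
        rw [this]
        exact Submodule.zero_mem _
    have := h3 (h2 ▸ h1)
    exact this
  · rintro ⟨d, hjd, hspan⟩
    constructor
    · rw [hjd]; exact hPnot d
    · rw [Submodule.mem_span_range_iff_exists_fun] at hspan
      obtain ⟨c, hc⟩ := hspan
      set w : ZMod m → ZMod 2 := ∑ t, c t • G t with hw
      have hwmem : w ∈ Submodule.span (ZMod 2)
          (Set.range G ∪ {v | ∃ k ∈ sideInfo m (m-3) i, v = Pi.single k (1:ZMod 2)}) :=
        Submodule.sum_mem _ (fun t _ =>
          Submodule.smul_mem _ _ (Submodule.subset_span (Or.inl ⟨t, rfl⟩)))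
      have hwval : ∀ s : Fin 3, w (P s) = (Pi.single d (1:ZMod 2) : Fin 3 → ZMod 2) s := by
        intro s
        have := congrFun hc s
        simp only [Finset.sum_apply, Pi.smul_apply, smul_eq_mul] at this ⊢
        rw [hw]
        simp only [Finset.sum_apply, Pi.smul_apply, smul_eq_mul]
        exact this
      have hdiff : Pi.single j (1:ZMod 2) - w ∈ Submodule.span (ZMod 2)
          {v | ∃ k ∈ sideInfo m (m-3) i, v = Pi.single k (1:ZMod 2)} := by
        apply span_singles hm
        intro k hk
        by_contra hkn
        apply hk
        have hk3 : k = i + 1 ∨ k = i + 2 ∨ k = i + 3 := by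
          by_contra hcon
          exact hkn ((mem_sideInfo_iff hm i k).mpr hcon)
        obtain ⟨s, hks⟩ : ∃ s : Fin 3, k = P s := by
          rcases hk3 with h | h | h
          exacts [⟨0, h.trans hP0.symm⟩, ⟨1, h.trans hP1.symm⟩, ⟨2, h.trans hP2.symm⟩]
        have hsv : (Pi.single j (1:ZMod 2) : ZMod m → ZMod 2) (P s) = (Pi.single d (1:ZMod 2) : Fin 3 → ZMod 2) s := by
          rw [hjd]
          exact congrFun (hsingle d) s
        rw [hks]
        simp only [Pi.sub_apply]
        rw [hsv, hwval s, sub_self]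
      have : Pi.single j (1:ZMod 2) = w + (Pi.single j 1 - w) := by ring
      rw [this]
      exact Submodule.add_mem _ hwmem
        (Submodule.span_mono Set.subset_union_right hdiff)



lemma main_window (hm : 11 ≤ m) (ho : Odd m) (i : ZMod m) :
    ∃ d : Fin 3,
      (∀ s : Fin 3, s ≠ d →
        Fc m ((i + 1 + ((s : ℕ) : ZMod m)).val) ≠ Fc m ((i + 1 + ((d : ℕ) : ZMod m)).val)) ∧
      (∀ s s' : Fin 3, s ≠ d → s' ≠ d →
        Fc m ((i + 1 + ((s : ℕ) : ZMod m)).val) = Fc m ((i + 1 + ((s' : ℕ) : ZMod m)).val)) := by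
  haveI : NeZero m := ⟨by omega⟩
  exact wpat_norm (fun s => Fc m ((i + 1 + ((s : ℕ) : ZMod m)).val)) (by
    have hv : (i + 1).val < m := ZMod.val_lt _
    have e0 : (i + 1 + (((0 : Fin 3) : ℕ) : ZMod m)).val = (i + 1).val := by norm_num
    have e1 : (i + 1 + (((1 : Fin 3) : ℕ) : ZMod m)).val = ((i + 1).val + 1) % m := by
      show (i + 1 + ((1 : ℕ) : ZMod m)).val = ((i + 1).val + 1) % m
      rw [ZMod.val_add, ZMod.val_cast_of_lt (by omega)]
    have e2 : (i + 1 + (((2 : Fin 3) : ℕ) : ZMod m)).val = ((i + 1).val + 2) % m := by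
      show (i + 1 + ((2 : ℕ) : ZMod m)).val = ((i + 1).val + 2) % m
      rw [ZMod.val_add, ZMod.val_cast_of_lt (by omega)]
    show Wpat (Fc m ((i + 1 + (((0 : Fin 3) : ℕ) : ZMod m)).val))
      (Fc m ((i + 1 + (((1 : Fin 3) : ℕ) : ZMod m)).val))
      (Fc m ((i + 1 + (((2 : Fin 3) : ℕ) : ZMod m)).val))
    rw [e0, e1, e2]
    exact windowAt hm ho (i + 1).val hv)

end AuxSD

theorem feasible_s_eq_m_sub_three_odd (m : ℕ) (hm : 11 ≤ m) (hodd : Odd m) :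
    ∃ G : Fin 4 → ZMod m → ZMod 2,
      IsDecentralizedCode m (m - 3) G ∧ Correct m (m - 3) G ∧
      Secure m (m - 3) G := by
  haveI : NeZero m := ⟨by omega⟩
  refine ⟨Gc m, ?_, ?_, ?_⟩
  · -- decentralized
    have decent : ∀ t : Fin 4, ∀ a : ℕ, a + 2 < m → Fc m a ≠ t → Fc m (a + 1) ≠ t →
        Fc m (a + 2) ≠ t → ∃ i : ZMod m, Function.support (Gc m t) ⊆ sideInfo m (m - 3) i := by
      intro t a ha h0 h1 h2
      refine ⟨(a : ZMod m) - 1, ?_⟩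
      intro j hj
      have hjt : Fc m j.val = t := by
        by_contra hc
        exact hj (by simp [Gc, hc])
      rw [mem_sideInfo_iff hm]
      have key : ∀ c : ℕ, c ≤ 2 → j = ((a + c : ℕ) : ZMod m) → False := by
        intro c hc hj'
        have hval : j.val = a + c := by rw [hj', ZMod.val_cast_of_lt (by omega)]
        interval_cases c
        · refine h0 ?_
          have h' : j.val = a := by omega
          rw [← h']; exact hjt
        · refine h1 ?_
          have h' : j.val = a + 1 := by omega
          rw [← h']; exact hjt
        · refine h2 ?_
          have h' : j.val = a + 2 := by omega
          rw [← h']; exact hjt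
      rintro (h | h | h)
      · exact key 0 (by omega) (by rw [h]; push_cast; ring)
      · exact key 1 (by omega) (by rw [h]; push_cast; ring)
      · exact key 2 (by omega) (by rw [h]; push_cast; ring)
    intro t
    fin_cases t
    · exact decent 0 3 (by omega) (by norm_num [Fc]; try decide) (by norm_num [Fc]; try decide) (by norm_num [Fc]; try decide)
    · exact decent 1 5 (by omega) (by norm_num [Fc]; try decide) (by norm_num [Fc]; try decide) (by norm_num [Fc]; try decide)
    · exact decent 2 0 (by omega) (by norm_num [Fc]; try decide) (by norm_num [Fc]; try decide) (by norm_num [Fc]; try decide)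
    · exact decent 3 1 (by omega) (by norm_num [Fc]; try decide) (by norm_num [Fc]; try decide) (by norm_num [Fc]; try decide)
  · -- correct
    intro i
    obtain ⟨d, hd1, hd2⟩ := main_window hm hodd i
    refine ⟨i + 1 + ((d : ℕ) : ZMod m), ?_⟩
    rw [decSet_iff hm]
    refine ⟨d, rfl, ?_⟩
    have hfun : (fun s : Fin 3 => Gc m (Fc m ((i + 1 + ((d : ℕ) : ZMod m)).val))
        (i + 1 + ((s : ℕ) : ZMod m))) = Pi.single d (1 : ZMod 2) := by
      funext s
      by_cases hs : s = d
      · subst hs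
        simp [Gc]
      · rw [Pi.single_eq_of_ne hs]
        simp only [Gc]
        rw [if_neg (hd1 s hs)]
    exact Submodule.subset_span ⟨_, hfun⟩
  · -- secure
    intro i j1 hj1 j2 hj2
    obtain ⟨d, hd1, hd2⟩ := main_window hm hodd i
    rw [decSet_iff hm] at hj1 hj2
    obtain ⟨d1, he1, hs1⟩ := hj1
    obtain ⟨d2, he2, hs2⟩ := hj2
    have key : ∀ d' : Fin 3, Pi.single d' (1 : ZMod 2) ∈ Submodule.span (ZMod 2)
        (Set.range fun t : Fin 4 => fun s : Fin 3 => Gc m t (i + 1 + ((s : ℕ) : ZMod m))) →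
        d' = d := by
      intro d' hd'
      by_contra hne
      have tri : ∀ x y : Fin 3, ¬x = y → ∃ e : Fin 3, e ≠ y ∧ e ≠ x := by decide
      obtain ⟨e, hed, hed'⟩ := tri d' d hne
      set φ : (Fin 3 → ZMod 2) →ₗ[ZMod 2] ZMod 2 :=
        (LinearMap.proj d' : (Fin 3 → ZMod 2) →ₗ[ZMod 2] ZMod 2)
          + (LinearMap.proj e : (Fin 3 → ZMod 2) →ₗ[ZMod 2] ZMod 2) with hφ
      have hker : Submodule.span (ZMod 2)
          (Set.range fun t : Fin 4 => fun s : Fin 3 => Gc m t (i + 1 + ((s : ℕ) : ZMod m)))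
          ≤ LinearMap.ker φ := by
        rw [Submodule.span_le]
        rintro x ⟨t, rfl⟩
        have hval : Fc m ((i + 1 + ((d' : ℕ) : ZMod m)).val)
            = Fc m ((i + 1 + ((e : ℕ) : ZMod m)).val) := hd2 d' e hne hed
        have happ : φ (fun s : Fin 3 => Gc m t (i + 1 + ((s : ℕ) : ZMod m)))
            = Gc m t (i + 1 + ((d' : ℕ) : ZMod m)) + Gc m t (i + 1 + ((e : ℕ) : ZMod m)) := rfl
        have hz : φ (fun s : Fin 3 => Gc m t (i + 1 + ((s : ℕ) : ZMod m))) = 0 := by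
          rw [happ]
          simp only [Gc]
          rw [hval]
          split_ifs <;> decide
        simp only [SetLike.mem_coe, LinearMap.mem_ker]
        exact hz
      have h1 : φ (Pi.single d' (1 : ZMod 2)) = 0 := LinearMap.mem_ker.mp (hker hd')
      have h2 : φ (Pi.single d' (1 : ZMod 2)) = 1 := by
        have happ : φ (Pi.single d' (1 : ZMod 2))
            = (Pi.single d' (1 : ZMod 2) : Fin 3 → ZMod 2) d'
              + (Pi.single d' (1 : ZMod 2) : Fin 3 → ZMod 2) e := rfl
        rw [happ, Pi.single_eq_same, Pi.single_eq_of_ne hed', add_zero]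
      rw [h1] at h2
      exact (by decide : (0 : ZMod 2) ≠ 1) h2
    rw [he1, he2, key d1 hs1, key d2 hs2]
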